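/- arXiv:2305.00276 — 3 statements merged into one kernel-verified Lean document; each statement's English description precedes it below -/
import Mathlib

section
/- Suppose c₂=2 and p^{(2,2)}_{(1,p−1),(1,s−1)}≠0 for some (1,p−1),(1,s−1)∈∂̃(Γ) with (2,2)∈∂̃(Γ). Then p=s, and moreover exactly one of the following holds: (i) p=2 and p^{(2,2)}_{(1,1),(1,1)}=2; (ii) p∈{3,4} and p^{(2,2)}_{(1,p−1),(1,p−1)}=1. -/
namespace Paper

/-- A digraph: a set of vertices together with a set of arcs (ordered pairs of
distinct vertices). -/
structure Digraph (V : Type*) where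
  Adj : V → V → Prop
  loopless : ∀ v : V, ¬ Adj v v

variable {V V' : Type*}

namespace Digraph

/-- There is a directed walk of length `n` from `x` to `y`. -/
def HasPath (G : Digraph V) (x y : V) (n : ℕ) : Prop :=
  ∃ f : ℕ → V, f 0 = x ∧ f n = y ∧ ∀ k < n, G.Adj (f k) (f (k + 1))

/-- The distance `∂(x,y)`: the length of a shortest directed path from `x` to `y`. -/
noncomputable def dist (G : Digraph V) (x y : V) : ℕ :=
  sInf {n | G.HasPath x y n}

/-- The two-way distance `∂̃(x,y) = (∂(x,y), ∂(y,x))`. -/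
noncomputable def tdist (G : Digraph V) (x y : V) : ℕ × ℕ :=
  (G.dist x y, G.dist y x)

/-- The two-way distance set `∂̃(Γ)`. -/
def tdSet (G : Digraph V) : Set (ℕ × ℕ) :=
  {p | ∃ x y : V, G.tdist x y = p}

def StronglyConnected (G : Digraph V) : Prop :=
  ∀ x y : V, ∃ n, G.HasPath x y n

/-- `P_{ĩ,j̃}(x,y)`: the set of `z` with `∂̃(x,z) = ĩ` and `∂̃(z,y) = j̃`. -/
def P (G : Digraph V) (i j : ℕ × ℕ) (x y : V) : Set V :=
  {z | G.tdist x z = i ∧ G.tdist z y = j}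

open Classical in
/-- The intersection number `p^{h̃}_{ĩ,j̃}`, defined using an arbitrarily chosen
pair at two-way distance `h̃` (and `0` if there is no such pair). -/
noncomputable def p (G : Digraph V) (h i j : ℕ × ℕ) : ℕ :=
  if hh : ∃ xy : V × V, G.tdist xy.1 xy.2 = h then
    Nat.card (G.P i j hh.choose.1 hh.choose.2)
  else 0

/-- A weakly distance-regular digraph: strongly connected, and
`|P_{ĩ,j̃}(x,y)|` depends only on `∂̃(x,y)`, `ĩ` and `j̃`. -/
def IsWDR (G : Digraph V) : Prop :=
  G.StronglyConnected ∧
    ∀ (i j : ℕ × ℕ) (x y : V), Nat.card (G.P i j x y) = G.p (G.tdist x y) i j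

/-- Commutativity: `p^{h̃}_{ĩ,j̃} = p^{h̃}_{j̃,ĩ}` for all `h̃,ĩ,j̃ ∈ ∂̃(Γ)`. -/
def IsCommutative (G : Digraph V) : Prop :=
  ∀ h i j : ℕ × ℕ, h ∈ G.tdSet → i ∈ G.tdSet → j ∈ G.tdSet → G.p h i j = G.p h j i

/-- `Γ` is an undirected graph, i.e. its arc set is symmetric. -/
def IsUndirected (G : Digraph V) : Prop :=
  ∀ x y : V, G.Adj x y → G.Adj y x

def IsSemicomplete (G : Digraph V) : Prop :=
  ∀ x y : V, x ≠ y → (G.Adj x y ∨ G.Adj y x)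

/-- `Γ` is a complete (undirected) graph. -/
def IsCompleteDigraph (G : Digraph V) : Prop :=
  ∀ x y : V, x ≠ y → (G.Adj x y ∧ G.Adj y x)

/-- The underlying graph of a digraph. -/
def underlying (G : Digraph V) : SimpleGraph V where
  Adj x y := G.Adj x y ∨ G.Adj y x
  symm := ⟨fun _ _ h => h.symm⟩
  loopless := ⟨fun x h => h.elim (G.loopless x) (G.loopless x)⟩

/-- The diameter: the maximum value of the distance function. -/
noncomputable def diameter (G : Digraph V) : ℕ :=
  sSup {n | ∃ x y : V, G.dist x y = n}

/-- The girth: the length of a shortest circuit. -/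
noncomputable def girth (G : Digraph V) : ℕ :=
  sInf {n | 0 < n ∧ ∃ x : V, G.HasPath x x n}

/-- Number of out-neighbours `d⁺(x)`. -/
noncomputable def outDeg (G : Digraph V) (x : V) : ℕ := Nat.card {y | G.Adj x y}

/-- Number of in-neighbours `d⁻(x)`. -/
noncomputable def inDeg (G : Digraph V) (x : V) : ℕ := Nat.card {y | G.Adj y x}

def IsIsomorphicTo (G : Digraph V) (G' : Digraph V') : Prop :=
  ∃ e : V ≃ V', ∀ x y : V, G.Adj x y ↔ G'.Adj (e x) (e y)

/-- The Cartesian product of two digraphs. -/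
def box (G : Digraph V) (G' : Digraph V') : Digraph (V × V') where
  Adj x y := (x.1 = y.1 ∧ G'.Adj x.2 y.2) ∨ (G.Adj x.1 y.1 ∧ x.2 = y.2)
  loopless := fun v h => h.elim (fun h' => G'.loopless v.2 h'.2) (fun h' => G.loopless v.1 h'.1)

/-- Two digraphs have the same intersection numbers. -/
def SameIntersectionNumbers (G : Digraph V) (G' : Digraph V') : Prop :=
  G.tdSet = G'.tdSet ∧
    ∀ h i j : ℕ × ℕ, h ∈ G.tdSet → i ∈ G.tdSet → j ∈ G.tdSet → G.p h i j = G'.p h i j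

/-- Induced subdigraph on a set of vertices. -/
def induce (G : Digraph V) (s : Set V) : Digraph s where
  Adj x y := G.Adj x.1 y.1
  loopless := fun v h => G.loopless v.1 h

end Digraph

/-- The Cartesian product of a family of digraphs. -/
def piBox {ι : Type*} {W : ι → Type*} (G : ∀ i, Digraph (W i)) : Digraph (∀ i, W i) where
  Adj x y := ∃ i, (G i).Adj (x i) (y i) ∧ ∀ j, j ≠ i → x j = y j
  loopless := by
    rintro v ⟨i, hi, -⟩
    exact (G i).loopless _ hi

/-- The Cayley digraph `Cay(A,S)` of an additive group (for `S ⊆ A ∖ {0}`). -/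
def Cay (A : Type*) [AddGroup A] (S : Set A) : Digraph A where
  Adj x y := x ≠ y ∧ y - x ∈ S
  loopless := fun _ h => h.1 rfl

/-- The Cayley graph of an additive group with respect to a symmetric connection set. -/
def cayleyGraph (A : Type*) [AddGroup A] (S : Set A) : SimpleGraph A where
  Adj x y := x ≠ y ∧ (y - x ∈ S ∨ x - y ∈ S)
  symm := ⟨fun _ _ h => ⟨h.1.symm, h.2.symm⟩⟩
  loopless := ⟨fun _ h => h.1 rfl⟩

/-- The Hamming graph `H(ι, S)`: vertices are tuples, adjacent iff they differ in
exactly one coordinate. -/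
def hammingGraph (ι : Type*) (S : Type*) : SimpleGraph (ι → S) where
  Adj x y := ∃ i, x i ≠ y i ∧ ∀ j, j ≠ i → x j = y j
  symm := by
    refine ⟨?_⟩
    rintro x y ⟨i, h1, h2⟩
    exact ⟨i, h1.symm, fun j hj => (h2 j hj).symm⟩
  loopless := by
    refine ⟨?_⟩
    rintro x ⟨i, h1, -⟩
    exact h1 rfl

/-- The folded `n`-cube: vertices are `(n-1)`-tuples over `ℤ₂`, adjacent iff they
differ in exactly one coordinate or in all `n-1` coordinates. -/
def foldedCube (n : ℕ) : SimpleGraph (Fin (n - 1) → ZMod 2) where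
  Adj x y := (∃ i, x i ≠ y i ∧ ∀ j, j ≠ i → x j = y j) ∨ (x ≠ y ∧ ∀ j, x j ≠ y j)
  symm := by
    refine ⟨?_⟩
    rintro x y (⟨i, h1, h2⟩ | ⟨h1, h2⟩)
    · exact Or.inl ⟨i, h1.symm, fun j hj => (h2 j hj).symm⟩
    · exact Or.inr ⟨h1.symm, fun j => (h2 j).symm⟩
  loopless := by
    refine ⟨?_⟩
    rintro x (⟨i, h1, -⟩ | ⟨h1, -⟩)
    · exact h1 rfl
    · exact h1 rfl

/-- The Cartesian product of a family of simple graphs. -/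
def piBoxGraph {ι : Type*} {W : ι → Type*} (G : ∀ i, SimpleGraph (W i)) :
    SimpleGraph (∀ i, W i) where
  Adj x y := ∃ i, (G i).Adj (x i) (y i) ∧ ∀ j, j ≠ i → x j = y j
  symm := by
    refine ⟨?_⟩
    rintro x y ⟨i, h1, h2⟩
    exact ⟨i, (G i).adj_symm h1, fun j hj => (h2 j hj).symm⟩
  loopless := by
    refine ⟨?_⟩
    rintro x ⟨i, h1, -⟩
    exact (G i).loopless.irrefl _ h1

/-- The Shrikhande graph `Cay(ℤ₄ × ℤ₄, {±(1,0), ±(0,1), ±(1,1)})`. -/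
def shrikhande : SimpleGraph (ZMod 4 × ZMod 4) :=
  cayleyGraph (ZMod 4 × ZMod 4) {(1, 0), (-1, 0), (0, 1), (0, -1), (1, 1), (-1, -1)}

/-- The Doob graph `G(d₁, d₂)`: the Cartesian product of `d₁` copies of the
Shrikhande graph with the Hamming graph `H(d₂, 4)`. -/
def doobGraph (d₁ d₂ : ℕ) :
    SimpleGraph ((Fin d₁ → ZMod 4 × ZMod 4) × (Fin d₂ → ZMod 4)) :=
  (piBoxGraph fun _ : Fin d₁ => shrikhande).boxProd (hammingGraph (Fin d₂) (ZMod 4))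

/-- `c_i(x,y)`: the number of neighbours of `y` at distance `i - 1` from `x`. -/
noncomputable def cNum (G : SimpleGraph V) (i : ℕ) (x y : V) : ℕ :=
  Nat.card {z : V | G.Adj y z ∧ G.dist x z = i - 1}

/-- `a_i(x,y)`: the number of neighbours of `y` at distance `i` from `x`. -/
noncomputable def aNum (G : SimpleGraph V) (i : ℕ) (x y : V) : ℕ :=
  Nat.card {z : V | G.Adj y z ∧ G.dist x z = i}

/-- `b_i(x,y)`: the number of neighbours of `y` at distance `i + 1` from `x`. -/
noncomputable def bNum (G : SimpleGraph V) (i : ℕ) (x y : V) : ℕ :=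
  Nat.card {z : V | G.Adj y z ∧ G.dist x z = i + 1}

/-- A distance-regular graph. -/
def IsDRG (G : SimpleGraph V) : Prop :=
  G.Connected ∧
    ∀ (i : ℕ) (x y x' y' : V), G.dist x y = i → G.dist x' y' = i →
      cNum G i x y = cNum G i x' y' ∧ bNum G i x y = bNum G i x' y'

/-- A distance-transitive graph. -/
def IsDistanceTransitive (G : SimpleGraph V) : Prop :=
  G.Connected ∧
    ∀ x y x' y' : V, G.dist x y = G.dist x' y' → ∃ σ : G ≃g G, σ x = x' ∧ σ y = y'

/-- The vertex set of `Γ_i(α)`: all tuples obtained from `α` by inserting an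
arbitrary element of `S` in the `i`-th coordinate. -/
def lineSet {n : ℕ} {S : Type*} (i : Fin (n + 1)) (α : Fin n → S) : Set (Fin (n + 1) → S) :=
  Set.range fun b : S => i.insertNth b α

/-- The induced subdigraph `Γ_i(α)`. -/
def Digraph.line {n : ℕ} {S : Type*} (Γ : Digraph (Fin (n + 1) → S)) (i : Fin (n + 1))
    (α : Fin n → S) : Digraph (lineSet i α) :=
  Γ.induce (lineSet i α)

/-- Pad a tuple of length `m` with the entry `o` to a tuple of length `d`. -/
def pad {S : Type*} (o : S) (d m : ℕ) (α : Fin m → S) : Fin d → S :=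
  fun j => if h : j.1 < m then α ⟨j.1, h⟩ else o

/-- The digraph `Γ^{[m]}` on `S^m`: `(α,β)` is an arc iff the padded tuples form
an arc of `Γ`. -/
def Digraph.trunc {S : Type*} {d : ℕ} (Γ : Digraph (Fin d → S)) (o : S) (m : ℕ) :
    Digraph (Fin m → S) where
  Adj α β := Γ.Adj (pad o d m α) (pad o d m β)
  loopless := fun _ h => Γ.loopless _ h

/-- The digraph `Γ^i` on `S`: `(a,b)` is an arc iff the tuples with `a` resp. `b`
in the `i`-th coordinate and `o` elsewhere form an arc of `Γ`. -/
def Digraph.coordDigraph {S : Type*} {d : ℕ} (Γ : Digraph (Fin d → S)) (o : S) (i : Fin d) :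
    Digraph S where
  Adj a b := Γ.Adj (Function.update (fun _ => o) i a) (Function.update (fun _ => o) i b)
  loopless := fun _ h => Γ.loopless _ h

/-- The set `T = S^{m-1} × {(o,…,o)}` (as a subset of `S^{d-1}`, here `d = n+1`). -/
def Tset {n : ℕ} (S : Type*) (o : S) (m : ℕ) : Set (Fin n → S) :=
  {α | ∀ j : Fin n, m - 1 ≤ j.1 → α j = o}

end Paper


namespace Paper.Digraph

variable {V : Type*} (Γ : Paper.Digraph V)

lemma hasPath_trans {x y z : V} {m n : ℕ} (h1 : Γ.HasPath x y m) (h2 : Γ.HasPath y z n) :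
    Γ.HasPath x z (m + n) := by
  obtain ⟨f, hf0, hfm, hf⟩ := h1
  obtain ⟨g, hg0, hgn, hg⟩ := h2
  refine ⟨fun k => if k < m then f k else g (k - m), ?_, ?_, ?_⟩
  · by_cases h : 0 < m
    · simp [h, hf0]
    · have hm : m = 0 := by omega
      subst hm
      simpa [hg0] using hfm.symm.trans hf0
  · simp [hgn]
  · intro k hk
    rcases lt_trichotomy (k + 1) m with h | h | h
    · simpa [show k < m by omega, h] using hf k (by omega)
    · have hkm : k < m := by omega
      simp only [if_pos hkm, if_neg (show ¬ k + 1 < m by omega)]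
      have he : g (k + 1 - m) = f (k + 1) := by
        subst h
        rw [Nat.sub_self, hg0, hfm]
      rw [he]
      exact hf k (by omega)
    · have hkm : ¬ k < m := by omega
      simp only [if_neg hkm, if_neg (show ¬ k + 1 < m by omega)]
      rw [show k + 1 - m = (k - m) + 1 by omega]
      exact hg (k - m) (by omega)

lemma dist_le' {x y : V} {n : ℕ} (h : Γ.HasPath x y n) : Γ.dist x y ≤ n :=
  Nat.sInf_le h

lemma hasPath_dist (hsc : Γ.StronglyConnected) (x y : V) : Γ.HasPath x y (Γ.dist x y) :=
  Nat.sInf_mem (hsc x y)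

lemma dist_triangle (hsc : Γ.StronglyConnected) (x y z : V) :
    Γ.dist x z ≤ Γ.dist x y + Γ.dist y z :=
  Γ.dist_le' (Γ.hasPath_trans (Γ.hasPath_dist hsc x y) (Γ.hasPath_dist hsc y z))

lemma dist_eq_zero_iff (hsc : Γ.StronglyConnected) {x y : V} :
    Γ.dist x y = 0 ↔ x = y := by
  constructor
  · intro h
    have hpath := Γ.hasPath_dist hsc x y
    rw [h] at hpath
    obtain ⟨f, h0, h1, -⟩ := hpath
    rw [← h0, h1]
  · rintro rfl
    exact Nat.le_zero.mp (Γ.dist_le' ⟨fun _ => x, rfl, rfl, fun k hk => absurd hk (Nat.not_lt_zero k)⟩)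

lemma adj_dist_one (hsc : Γ.StronglyConnected) {x y : V} (h : Γ.Adj x y) :
    Γ.dist x y = 1 := by
  have hle : Γ.dist x y ≤ 1 := by
    refine Γ.dist_le' ⟨fun k => if k = 0 then x else y, by simp, by simp, ?_⟩
    intro k hk
    have : k = 0 := by omega
    subst this
    simpa using h
  have hne : x ≠ y := by
    rintro rfl
    exact Γ.loopless x h
  have h0 : Γ.dist x y ≠ 0 := fun h0 => hne ((Γ.dist_eq_zero_iff hsc).mp h0)
  omega

lemma dist_one_adj (hsc : Γ.StronglyConnected) {x y : V} (h : Γ.dist x y = 1) :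
    Γ.Adj x y := by
  have hpath := Γ.hasPath_dist hsc x y
  rw [h] at hpath
  obtain ⟨f, h0, h1, hadj⟩ := hpath
  have := hadj 0 one_pos
  rwa [h0, h1] at this

lemma tdist_rev {x y : V} {i : ℕ × ℕ} (h : Γ.tdist x y = i) :
    Γ.tdist y x = (i.2, i.1) := by
  have h1 : Γ.dist x y = i.1 := congrArg Prod.fst h
  have h2 : Γ.dist y x = i.2 := congrArg Prod.snd h
  simp [Paper.Digraph.tdist, h1, h2]

lemma mem_P_rev {x y w : V} {i j : ℕ × ℕ} (h : w ∈ Γ.P i j x y) :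
    w ∈ Γ.P (j.2, j.1) (i.2, i.1) y x :=
  ⟨Γ.tdist_rev h.2, Γ.tdist_rev h.1⟩

end Paper.Digraph

open Paper in
lemma three_not_in_two {V : Type*} [Finite V] {N : Set V} (h2 : Nat.card N = 2) {a b c : V}
    (ha : a ∈ N) (hb : b ∈ N) (hc : c ∈ N) (hab : a ≠ b) (hac : a ≠ c) (hbc : b ≠ c) :
    False := by
  have hsub : ({a, b, c} : Set V) ⊆ N := by
    intro w hw
    rcases hw with rfl | rfl | rfl <;> assumption
  have h3 : ({a, b, c} : Set V).ncard = 3 := by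
    rw [Set.ncard_insert_of_notMem (by simp [hab, hac]) (Set.toFinite _), Set.ncard_pair hbc]
  have hle := Set.ncard_le_ncard hsub (Set.toFinite N)
  rw [h3] at hle
  rw [Nat.card_coe_set_eq] at h2
  omega

open Paper in
/-- **Lemma 3.1.** Suppose `c₂ = 2` and `p^{(2,2)}_{(1,p−1),(1,s−1)} ≠ 0`. Then
`p = s`, and either `p = 2` and `p^{(2,2)}_{(1,1),(1,1)} = 2`, or `p ∈ {3,4}` and
`p^{(2,2)}_{(1,p−1),(1,p−1)} = 1`. -/
theorem lemma_s_eq_t {V : Type*} [Finite V] [Nonempty V] (Γ : Paper.Digraph V)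
    (hwdr : Γ.IsWDR) (hcomm : Γ.IsCommutative)
    (hdrg : IsDRG Γ.underlying)
    (hc2 : ∀ x y : V, Γ.underlying.dist x y = 2 → cNum Γ.underlying 2 x y = 2)
    (p s : ℕ)
    (hp : ((1 : ℕ), p - 1) ∈ Γ.tdSet) (hs : ((1 : ℕ), s - 1) ∈ Γ.tdSet)
    (h22 : ((2 : ℕ), (2 : ℕ)) ∈ Γ.tdSet)
    (hne : Γ.p (2, 2) (1, p - 1) (1, s - 1) ≠ 0) :
    p = s ∧
      ((p = 2 ∧ Γ.p (2, 2) (1, 1) (1, 1) = 2) ∨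
        ((p = 3 ∨ p = 4) ∧ Γ.p (2, 2) (1, p - 1) (1, p - 1) = 1)) := by
  obtain ⟨hsc, hPcard⟩ := hwdr
  -- both `p - 1` and `s - 1` are at least 1
  have hge : ∀ t : ℕ, ((1 : ℕ), t) ∈ Γ.tdSet → 1 ≤ t := by
    rintro t ⟨u, v, huv⟩
    have h1 : Γ.dist u v = 1 := congrArg Prod.fst huv
    have h2 : Γ.dist v u = t := congrArg Prod.snd huv
    have hne' : u ≠ v := by
      rintro rfl
      rw [(Γ.dist_eq_zero_iff hsc).mpr rfl] at h1
      omega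
    have h0 : Γ.dist v u ≠ 0 := fun h0 => hne' ((Γ.dist_eq_zero_iff hsc).mp h0).symm
    omega
  have hp1 : 1 ≤ p - 1 := hge _ hp
  have hs1 : 1 ≤ s - 1 := hge _ hs
  obtain ⟨x, y, hxy⟩ := h22
  have h22' : ((2 : ℕ), (2 : ℕ)) ∈ Γ.tdSet := ⟨x, y, hxy⟩
  have hdxy : Γ.dist x y = 2 := congrArg Prod.fst hxy
  have hdyx : Γ.dist y x = 2 := congrArg Prod.snd hxy
  have hyx : Γ.tdist y x = ((2 : ℕ), (2 : ℕ)) := Γ.tdist_rev hxy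
  have hd : ∀ i j : ℕ × ℕ, Nat.card (Γ.P i j x y) = Γ.p (2, 2) i j := by
    intro i j
    have := hPcard i j x y
    rwa [hxy] at this
  have hd' : ∀ i j : ℕ × ℕ, Nat.card (Γ.P i j y x) = Γ.p (2, 2) i j := by
    intro i j
    have := hPcard i j y x
    rwa [hyx] at this
  have hget : ∀ i j : ℕ × ℕ, Γ.p (2, 2) i j ≠ 0 → ∃ w, w ∈ Γ.P i j x y := by
    intro i j h
    rw [← hd i j, Nat.card_coe_set_eq] at h
    exact Set.nonempty_of_ncard_ne_zero h
  have hput : ∀ (i j : ℕ × ℕ) (w : V), w ∈ Γ.P i j x y → Γ.p (2, 2) i j ≠ 0 := by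
    intro i j w hw
    rw [← hd i j, Nat.card_coe_set_eq]
    have := (Set.ncard_pos (Set.toFinite _)).mpr ⟨w, hw⟩
    omega
  have hput' : ∀ (i j : ℕ × ℕ) (w : V), w ∈ Γ.P i j y x → Γ.p (2, 2) i j ≠ 0 := by
    intro i j w hw
    rw [← hd' i j, Nat.card_coe_set_eq]
    have := (Set.ncard_pos (Set.toFinite _)).mpr ⟨w, hw⟩
    omega
  -- the underlying graph facts
  have hUconn : Γ.underlying.Connected := hdrg.1
  have hxney : x ≠ y := by
    rintro rfl
    rw [(Γ.dist_eq_zero_iff hsc).mpr rfl] at hdxy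
    omega
  have hnadj : ¬ Γ.underlying.Adj x y := by
    rintro (h | h)
    · have := Γ.adj_dist_one hsc h
      omega
    · have := Γ.adj_dist_one hsc h
      omega
  have hU2 : Γ.underlying.dist x y = 2 := by
    have hpath := Γ.hasPath_dist hsc x y
    rw [hdxy] at hpath
    obtain ⟨f, hf0, hf2, hfadj⟩ := hpath
    have ha1 : Γ.Adj x (f 1) := by simpa [hf0] using hfadj 0 (by omega)
    have ha2 : Γ.Adj (f 1) y := by simpa [hf2] using hfadj 1 (by omega)
    have hA1 : Γ.underlying.Adj x (f 1) := Or.inl ha1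
    have hA2 : Γ.underlying.Adj (f 1) y := Or.inl ha2
    have hwalk : Γ.underlying.dist x y ≤ 2 := by
      simpa using SimpleGraph.dist_le
        (SimpleGraph.Walk.cons hA1 (SimpleGraph.Walk.cons hA2 SimpleGraph.Walk.nil))
    have h0 : Γ.underlying.dist x y ≠ 0 := fun h => hxney (hUconn.dist_eq_zero_iff.mp h)
    have h1 : Γ.underlying.dist x y ≠ 1 := fun h => hnadj (SimpleGraph.dist_eq_one_iff_adj.mp h)
    omega
  set N : Set V := {w | Γ.underlying.Adj y w ∧ Γ.underlying.dist x w = 1} with hN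
  have hcardN : Nat.card N = 2 := by
    have h := hc2 x y hU2
    unfold cNum at h
    rw [hN]
    simpa using h
  have hmemN : ∀ (w : V) (i j : ℕ × ℕ), w ∈ Γ.P i j x y → (i.1 = 1 ∨ i.2 = 1) →
      (j.1 = 1 ∨ j.2 = 1) → w ∈ N := by
    intro w i j hw hi hj
    have hxw1 : Γ.dist x w = i.1 := congrArg Prod.fst hw.1
    have hxw2 : Γ.dist w x = i.2 := congrArg Prod.snd hw.1
    have hwy1 : Γ.dist w y = j.1 := congrArg Prod.fst hw.2
    have hwy2 : Γ.dist y w = j.2 := congrArg Prod.snd hw.2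
    have hadjxw : Γ.underlying.Adj x w := by
      rcases hi with h | h
      · exact Or.inl (Γ.dist_one_adj hsc (by omega))
      · exact Or.inr (Γ.dist_one_adj hsc (by omega))
    have hadjyw : Γ.underlying.Adj y w := by
      rcases hj with h | h
      · exact Or.inr (Γ.dist_one_adj hsc (by omega))
      · exact Or.inl (Γ.dist_one_adj hsc (by omega))
    rw [hN]
    exact ⟨hadjyw, SimpleGraph.dist_eq_one_iff_adj.mpr hadjxw⟩
  obtain ⟨zA, hzA⟩ := hget _ _ hne
  -- Step 1 : p = s
  have hps : p = s := by
    by_contra hps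
    have hab : p - 1 ≠ s - 1 := by omega
    have hB : Γ.p (2, 2) (1, s - 1) (1, p - 1) ≠ 0 := by
      rw [← hcomm (2, 2) (1, p - 1) (1, s - 1) h22' hp hs]
      exact hne
    obtain ⟨zB, hzB⟩ := hget _ _ hB
    have hC : Γ.p (2, 2) (s - 1, 1) (p - 1, 1) ≠ 0 := hput' _ _ zA (Γ.mem_P_rev hzA)
    obtain ⟨zC, hzC⟩ := hget _ _ hC
    have hA_N := hmemN zA _ _ hzA (Or.inl rfl) (Or.inl rfl)
    have hB_N := hmemN zB _ _ hzB (Or.inl rfl) (Or.inl rfl)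
    have hC_N := hmemN zC _ _ hzC (Or.inr rfl) (Or.inr rfl)
    have hAB : zA ≠ zB := by
      rintro rfl
      have h2 : p - 1 = s - 1 := congrArg Prod.snd (hzA.1.symm.trans hzB.1)
      omega
    have hAC : zA ≠ zC := by
      rintro rfl
      have h1 : (1 : ℕ) = s - 1 := congrArg Prod.fst (hzA.1.symm.trans hzC.1)
      have h2 : p - 1 = 1 := congrArg Prod.snd (hzA.1.symm.trans hzC.1)
      omega
    have hBC : zB ≠ zC := by
      rintro rfl
      have h1 : (1 : ℕ) = s - 1 := congrArg Prod.fst (hzB.1.symm.trans hzC.1)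
      have h2 : (1 : ℕ) = p - 1 := congrArg Prod.fst (hzB.2.symm.trans hzC.2)
      omega
    exact three_not_in_two hcardN hA_N hB_N hC_N hAB hAC hBC
  subst hps
  refine ⟨rfl, ?_⟩
  have hC : Γ.p (2, 2) (p - 1, 1) (p - 1, 1) ≠ 0 := hput' _ _ zA (Γ.mem_P_rev hzA)
  obtain ⟨zC, hzC⟩ := hget _ _ hC
  have hzAN := hmemN zA _ _ hzA (Or.inl rfl) (Or.inl rfl)
  have hzCN := hmemN zC _ _ hzC (Or.inr rfl) (Or.inr rfl)
  by_cases hp2 : p - 1 = 1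
  · -- case (i) : p = 2
    left
    refine ⟨by omega, ?_⟩
    rw [hp2] at hzA
    have hsub : Γ.P ((1 : ℕ), (1 : ℕ)) ((1 : ℕ), (1 : ℕ)) x y ⊆ N := fun w hw =>
      hmemN w _ _ hw (Or.inl rfl) (Or.inl rfl)
    by_contra hk2
    have hPN : Γ.P ((1 : ℕ), (1 : ℕ)) ((1 : ℕ), (1 : ℕ)) x y ≠ N := by
      intro h
      exact hk2 (by rw [← hd ((1 : ℕ), (1 : ℕ)) ((1 : ℕ), (1 : ℕ)), h]; exact hcardN)
    obtain ⟨z', hz'N, hz'P⟩ := Set.exists_of_ssubset (ssubset_of_subset_of_ne hsub hPN)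
    have hz'N2 : z' ∈ N := hz'N
    rw [hN] at hz'N
    obtain ⟨hadjyz', hdxz'⟩ := hz'N
    have hadjxz' : Γ.underlying.Adj x z' := SimpleGraph.dist_eq_one_iff_adj.mp hdxz'
    set i' := Γ.tdist x z' with hi'
    set j' := Γ.tdist z' y with hj'
    have hz'mem : z' ∈ Γ.P i' j' x y := ⟨rfl, rfl⟩
    have hi'shape : i'.1 = 1 ∨ i'.2 = 1 := by
      rcases hadjxz' with h | h
      · exact Or.inl (Γ.adj_dist_one hsc h)
      · exact Or.inr (Γ.adj_dist_one hsc h)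
    have hj'shape : j'.1 = 1 ∨ j'.2 = 1 := by
      rcases hadjyz' with h | h
      · exact Or.inr (Γ.adj_dist_one hsc h)
      · exact Or.inl (Γ.adj_dist_one hsc h)
    have htype' : ¬ (i' = ((1 : ℕ), (1 : ℕ)) ∧ j' = ((1 : ℕ), (1 : ℕ))) := by
      rintro ⟨h1, h2⟩
      exact hz'P ⟨h1, h2⟩
    have hii : i' ∈ Γ.tdSet := ⟨x, z', rfl⟩
    have hjj : j' ∈ Γ.tdSet := ⟨z', y, rfl⟩
    have hB2 : Γ.p (2, 2) j' i' ≠ 0 := by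
      rw [hcomm (2, 2) j' i' h22' hjj hii]
      exact hput _ _ z' hz'mem
    obtain ⟨z'', hz''⟩ := hget _ _ hB2
    have hz''N : z'' ∈ N := hmemN z'' _ _ hz'' hj'shape hi'shape
    have hAz' : zA ≠ z' := by
      rintro rfl
      exact hz'P hzA
    by_cases hz''A : z'' = zA
    · subst hz''A
      exact htype' ⟨hz''.2.symm.trans hzA.2, hz''.1.symm.trans hzA.1⟩
    by_cases hz''B : z'' = z'
    · have hij : i' = j' := by rw [hi', ← hz''B]; exact hz''.1
      have hC2 : Γ.p (2, 2) (j'.2, j'.1) (i'.2, i'.1) ≠ 0 := hput' _ _ z' (Γ.mem_P_rev hz'mem)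
      obtain ⟨z3, hz3⟩ := hget _ _ hC2
      have hz3N : z3 ∈ N := hmemN z3 _ _ hz3 (Or.symm hj'shape) (Or.symm hi'shape)
      by_cases h3A : z3 = zA
      · have h1 : ((j'.2, j'.1) : ℕ × ℕ) = ((1 : ℕ), (1 : ℕ)) := by
          rw [← hz3.1, h3A, hzA.1]
        have ha : j'.2 = 1 := congrArg Prod.fst h1
        have hb : j'.1 = 1 := congrArg Prod.snd h1
        have hj11 : j' = ((1 : ℕ), (1 : ℕ)) := Prod.ext hb ha
        exact htype' ⟨hij.trans hj11, hj11⟩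
      by_cases h3B : z3 = z'
      · have h1 : ((j'.2, j'.1) : ℕ × ℕ) = i' := by
          rw [← hz3.1, h3B, ← hi']
        have h2 : ((j'.2, j'.1) : ℕ × ℕ) = j' := h1.trans hij
        have ha : j'.2 = j'.1 := congrArg Prod.fst h2
        have hj11 : j' = ((1 : ℕ), (1 : ℕ)) := by
          rcases hj'shape with h | h
          · exact Prod.ext h (by omega)
          · exact Prod.ext (by omega) h
        exact htype' ⟨hij.trans hj11, hj11⟩
      · exact three_not_in_two hcardN hzAN hz'N2 hz3N hAz' (Ne.symm h3A) (Ne.symm h3B)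
    · exact three_not_in_two hcardN hzAN hz'N2 hz''N hAz' (Ne.symm hz''A) (Ne.symm hz''B)
  · -- case (ii) : p ∈ {3, 4}
    right
    have hdzAx : Γ.dist zA x = p - 1 := congrArg Prod.snd hzA.1
    have hdzAy : Γ.dist zA y = 1 := congrArg Prod.fst hzA.2
    have htri := Γ.dist_triangle hsc zA y x
    rw [hdzAx, hdzAy, hdyx] at htri
    refine ⟨by omega, ?_⟩
    have hAC : zA ≠ zC := by
      rintro rfl
      have h1 : (1 : ℕ) = p - 1 := congrArg Prod.fst (hzA.1.symm.trans hzC.1)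
      omega
    have hne0 := hput _ _ zA hzA
    rw [← hd ((1 : ℕ), p - 1) ((1 : ℕ), p - 1), Nat.card_coe_set_eq] at hne0 ⊢
    by_contra hcard1
    have h2lt : 1 < (Γ.P ((1 : ℕ), p - 1) ((1 : ℕ), p - 1) x y).ncard := by omega
    obtain ⟨z1, z2, hz1, hz2, h12⟩ := (Set.one_lt_ncard_iff (Set.toFinite _)).mp h2lt
    have hz1N := hmemN z1 _ _ hz1 (Or.inl rfl) (Or.inl rfl)
    have hz2N := hmemN z2 _ _ hz2 (Or.inl rfl) (Or.inl rfl)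
    have h1C : z1 ≠ zC := by
      rintro rfl
      have h1 : (1 : ℕ) = p - 1 := congrArg Prod.fst (hz1.1.symm.trans hzC.1)
      omega
    have h2C : z2 ≠ zC := by
      rintro rfl
      have h1 : (1 : ℕ) = p - 1 := congrArg Prod.fst (hz2.1.symm.trans hzC.1)
      omega
    exact three_not_in_two hcardN hz1N hz2N hzCN h12 h1C h2C
end

section
/- Let 1≤i≤m and α∈T. Suppose that for all x,y∈V(Γᵢ(α)) one has d⁺_{Γᵢ(α)}(x)=d⁺_{Γᵢ(α)}(y) or d⁻_{Γᵢ(α)}(x)=d⁻_{Γᵢ(α)}(y). If Γᵢ(α) is not a complete graph, then Γᵢ(α) is a weakly distance-regular digraph of diameter 2 and girth g with g≤3, and ∂̃(Γᵢ(α))={(0,0),(1,2),(2,1),(1,g−1)}. -/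
namespace Paper
namespace Digraph

variable {V : Type*} {G : Digraph V}

lemma hasPath_zero {x y : V} : G.HasPath x y 0 ↔ x = y := by
  constructor
  · rintro ⟨f, h0, hn, -⟩; rw [← h0, hn]
  · rintro rfl; exact ⟨fun _ => x, rfl, rfl, fun k hk => absurd hk (by omega)⟩

lemma hasPath_one {x y : V} : G.HasPath x y 1 ↔ G.Adj x y := by
  constructor
  · rintro ⟨f, h0, hn, ha⟩; have := ha 0 (by omega); rwa [h0, hn] at this
  · intro h
    refine ⟨fun k => if k = 0 then x else y, by simp, by simp, ?_⟩
    intro k hk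
    have : k = 0 := by omega
    subst this; simpa using h

lemma hasPath_two {x y : V} : G.HasPath x y 2 ↔ ∃ z, G.Adj x z ∧ G.Adj z y := by
  constructor
  · rintro ⟨f, h0, hn, ha⟩
    refine ⟨f 1, ?_, ?_⟩
    · have := ha 0 (by omega); rwa [h0] at this
    · have := ha 1 (by omega); rwa [hn] at this
  · rintro ⟨z, h1, h2⟩
    refine ⟨fun k => if k = 0 then x else if k = 1 then z else y, by simp, by simp, ?_⟩
    intro k hk
    interval_cases k <;> simpa

lemma dist_self (x : V) : G.dist x x = 0 :=
  Nat.sInf_eq_zero.mpr (Or.inl (hasPath_zero.mpr rfl))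

lemma dist_eq_one {x y : V} (h : G.Adj x y) : G.dist x y = 1 := by
  have hne : x ≠ y := fun he => G.loopless x (he ▸ h)
  refine le_antisymm (Nat.sInf_le (hasPath_one.mpr h)) ?_
  rw [Nat.one_le_iff_ne_zero]
  intro h0
  rcases Nat.sInf_eq_zero.mp h0 with h1 | h1
  · exact hne (hasPath_zero.mp h1)
  · exact absurd h1 (Set.nonempty_iff_ne_empty.mp ⟨1, hasPath_one.mpr h⟩)

lemma dist_eq_two {x y : V} (hne : x ≠ y) (hna : ¬ G.Adj x y)
    (h2 : ∃ z, G.Adj x z ∧ G.Adj z y) : G.dist x y = 2 := by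
  have hmem : (2 : ℕ) ∈ {n | G.HasPath x y n} := hasPath_two.mpr h2
  have hle : G.dist x y ≤ 2 := Nat.sInf_le hmem
  have hsm : G.dist x y ∈ {n | G.HasPath x y n} := Nat.sInf_mem ⟨2, hmem⟩
  interval_cases h : G.dist x y
  · exact absurd (hasPath_zero.mp hsm) hne
  · exact absurd (hasPath_one.mp hsm) hna
  · rfl

lemma eq_of_dist_eq_zero {x y : V} (hp : ∃ n, G.HasPath x y n) (h : G.dist x y = 0) :
    x = y := by
  have := Nat.sInf_mem (s := {n | G.HasPath x y n}) hp
  rw [Digraph.dist] at h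
  rw [h] at this
  exact hasPath_zero.mp this

lemma adj_of_dist_eq_one {x y : V} (h : G.dist x y = 1) : G.Adj x y := by
  have hne : {n | G.HasPath x y n}.Nonempty := by
    rw [Set.nonempty_iff_ne_empty]
    intro he
    rw [Digraph.dist, he, Nat.sInf_empty] at h
    exact one_ne_zero h.symm
  have := Nat.sInf_mem hne
  rw [Digraph.dist] at h
  rw [h] at this
  exact hasPath_one.mp this

lemma tdist_swap (x y : V) : G.tdist y x = (G.tdist x y).swap := rfl

end Digraph
end Paper

open Paper in
/-- **Lemma 3.4.** If all vertices of `Γᵢ(α)` have pairwise equal out-degrees or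
pairwise equal in-degrees in `Γᵢ(α)`, and `Γᵢ(α)` is not a complete graph, then
`Γᵢ(α)` is a weakly distance-regular digraph of diameter `2` and girth `g ≤ 3`
with `∂̃(Γᵢ(α)) = {(0,0),(1,2),(2,1),(1,g−1)}`. -/
theorem lemma_line_wdr {S : Type*} [Finite S] {n : ℕ}
    (Γ : Paper.Digraph (Fin (n + 1) → S)) (q : ℕ) (hq : q = Nat.card S)
    (hwdr : Γ.IsWDR) (hcomm : Γ.IsCommutative)
    (hdrg : IsDRG Γ.underlying)
    (ha1 : ∀ x y, Γ.underlying.dist x y = 1 → aNum Γ.underlying 1 x y = q - 2)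
    (hc2 : ∀ x y, Γ.underlying.dist x y = 2 → cNum Γ.underlying 2 x y = 2)
    (o : S) (m : ℕ) (hm1 : 1 ≤ m) (hmd : m ≤ n + 1)
    (hham : (Γ.trunc o m).underlying = hammingGraph (Fin m) S)
    (i : Fin (n + 1)) (hi : i.1 < m)
    (α : Fin n → S) (hα : α ∈ Tset S o m)
    (hdeg : ∀ x y : lineSet i α,
      (Γ.line i α).outDeg x = (Γ.line i α).outDeg y ∨
      (Γ.line i α).inDeg x = (Γ.line i α).inDeg y)
    (hnc : ¬ (Γ.line i α).IsCompleteDigraph) :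
    (Γ.line i α).IsWDR ∧ (Γ.line i α).diameter = 2 ∧ (Γ.line i α).girth ≤ 3 ∧
      (Γ.line i α).tdSet =
        {((0 : ℕ), (0 : ℕ)), (1, 2), (2, 1), (1, (Γ.line i α).girth - 1)} := by
  classical
  set L := lineSet i α with hL
  set D := Γ.line i α with hD
  -- basic representation of line vertices
  have hrep : ∀ x : L, (x : Fin (n + 1) → S) = i.insertNth ((x : Fin (n + 1) → S) i) α := by
    rintro ⟨x, b, rfl⟩
    simp [Fin.insertNth_apply_same]
  have hinj : ∀ x y : L, (x : Fin (n + 1) → S) i = (y : Fin (n + 1) → S) i → x = y := by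
    intro x y h
    apply Subtype.ext
    rw [hrep x, hrep y, h]
  have hoff : ∀ (x y : L) (j : Fin (n + 1)), j ≠ i →
      (x : Fin (n + 1) → S) j = (y : Fin (n + 1) → S) j := by
    intro x y j hj
    obtain ⟨k, rfl⟩ := Fin.exists_succAbove_eq hj
    rw [hrep x, hrep y]
    simp [Fin.insertNth_apply_succAbove]
  have hDadj : ∀ x y : L, D.Adj x y ↔ Γ.Adj (x : Fin (n + 1) → S) (y : Fin (n + 1) → S) :=
    fun _ _ => Iff.rfl
  -- semicompleteness
  have hsuccval : ∀ k : Fin n, (i.succAbove k).1 = k.1 ∨ (i.succAbove k).1 = k.1 + 1 := by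
    intro k
    rw [Fin.succAbove]
    split
    · left; rfl
    · right; rfl
  have hpad : ∀ u : L, pad o (n + 1) m (fun j => (u : Fin (n+1) → S) (Fin.castLE hmd j)) =
      (u : Fin (n + 1) → S) := by
    intro u
    funext j
    rw [pad]
    split
    · next h => congr 1
    · next h =>
      have hji : j ≠ i := fun he => h (he ▸ hi)
      obtain ⟨k, hk⟩ := Fin.exists_succAbove_eq hji
      have hjk : (u : Fin (n+1) → S) j = α k := by
        rw [hrep u, ← hk, Fin.insertNth_apply_succAbove]
      have hkm : m - 1 ≤ k.1 := by
        rcases hsuccval k with h' | h' <;> rw [hk] at h' <;> omega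
      rw [hjk, hα k hkm]
  have hsemi : ∀ x y : L, x ≠ y → D.Adj x y ∨ D.Adj y x := by
    intro x y hne
    have hham' : (hammingGraph (Fin m) S).Adj (fun j => (x : Fin (n+1) → S) (Fin.castLE hmd j))
        (fun j => (y : Fin (n+1) → S) (Fin.castLE hmd j)) := by
      refine ⟨⟨i.1, hi⟩, ?_, ?_⟩
      · intro he
        apply hne
        apply hinj
        simp only [] at he
        have hci : Fin.castLE hmd ⟨i.1, hi⟩ = i := rfl
        rwa [hci] at he
      · intro j hj
        apply hoff
        intro he
        refine hj (Fin.ext ?_)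
        have := congrArg Fin.val he
        exact this
    rw [← hham] at hham'
    have hham2 : Γ.Adj (pad o (n+1) m (fun j => (x : Fin (n+1) → S) (Fin.castLE hmd j)))
          (pad o (n+1) m (fun j => (y : Fin (n+1) → S) (Fin.castLE hmd j)))
        ∨ Γ.Adj (pad o (n+1) m (fun j => (y : Fin (n+1) → S) (Fin.castLE hmd j)))
          (pad o (n+1) m (fun j => (x : Fin (n+1) → S) (Fin.castLE hmd j))) := hham'
    rw [hpad x, hpad y] at hham2
    rcases hham2 with h | h
    · exact Or.inl h
    · exact Or.inr h
  -- one-way pair exists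
  have honeway : ∃ x y : L, D.Adj x y ∧ ¬ D.Adj y x := by
    rw [Digraph.IsCompleteDigraph] at hnc
    push_neg at hnc
    obtain ⟨x, y, hne, hno⟩ := hnc
    rcases hsemi x y hne with h | h
    · exact ⟨x, y, h, fun h' => hno h h'⟩
    · refine ⟨y, x, h, fun h' => hno h' h⟩
  obtain ⟨x₀, y₀, hxy₀, hnyx₀⟩ := honeway
  have hne₀ : x₀ ≠ y₀ := by
    rintro rfl; exact D.loopless _ hxy₀
  -- q ≥ 2
  have hq2 : 2 ≤ q := by
    have hbc : (x₀ : Fin (n+1) → S) i ≠ (y₀ : Fin (n+1) → S) i := fun h => hne₀ (hinj _ _ h)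
    have : Nontrivial S := ⟨_, _, hbc⟩
    rw [hq]
    exact Finite.one_lt_card
  -- common neighbours of two line vertices lie in the line
  have hcardL : L.ncard = q := by
    have hinjf : Function.Injective (fun b : S => (i.insertNth b α : Fin (n+1) → S)) := by
      intro a b h
      have := congrArg (fun v => v i) h
      simpa [Fin.insertNth_apply_same] using this
    have hLr : L = Set.range (fun b : S => i.insertNth b α) := rfl
    rw [hq, hLr, ← Nat.card_coe_set_eq, Nat.card_range_of_injective hinjf]
  have hunderadj : ∀ x y : L, x ≠ y → Γ.underlying.Adj (x : Fin (n+1) → S) y := by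
    intro x y hne
    rcases hsemi x y hne with h | h
    · exact Or.inl h
    · exact Or.inr h
  have hcommon : ∀ x y : L, x ≠ y → ∀ z, Γ.underlying.Adj (x : Fin (n+1) → S) z →
      Γ.underlying.Adj (y : Fin (n+1) → S) z → z ∈ L := by
    intro x y hne z hxz hyz
    have hvne : (x : Fin (n+1) → S) ≠ (y : Fin (n+1) → S) := fun h => hne (Subtype.ext h)
    have hdist1 : Γ.underlying.dist (x : Fin (n+1) → S) y = 1 :=
      SimpleGraph.dist_eq_one_iff_adj.mpr (hunderadj x y hne)
    have ha := ha1 _ _ hdist1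
    rw [aNum] at ha
    set A := {z : Fin (n+1) → S | Γ.underlying.Adj (y : Fin (n+1) → S) z ∧
      Γ.underlying.dist (x : Fin (n+1) → S) z = 1} with hA
    set B := L \ {(x : Fin (n+1) → S), (y : Fin (n+1) → S)} with hBdef
    have hsub : B ⊆ A := by
      rintro w ⟨hwL, hw⟩
      simp only [Set.mem_insert_iff, Set.mem_singleton_iff, not_or] at hw
      obtain ⟨hwx, hwy⟩ := hw
      have hwx' : (⟨w, hwL⟩ : L) ≠ x := fun h => hwx (congrArg Subtype.val h)
      have hwy' : (⟨w, hwL⟩ : L) ≠ y := fun h => hwy (congrArg Subtype.val h)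
      exact ⟨hunderadj y ⟨w, hwL⟩ hwy'.symm,
        SimpleGraph.dist_eq_one_iff_adj.mpr (hunderadj x ⟨w, hwL⟩ hwx'.symm)⟩
    have hBcard : B.ncard = q - 2 := by
      have hpairsub : {(x : Fin (n+1) → S), (y : Fin (n+1) → S)} ⊆ L := by
        rintro w (rfl | hw)
        · exact x.2
        · simp only [Set.mem_singleton_iff] at hw
          rw [hw]; exact y.2
      rw [hBdef, Set.ncard_diff hpairsub, hcardL, Set.ncard_pair hvne]
    have hAcard : A.ncard = q - 2 := by rw [← Nat.card_coe_set_eq]; exact ha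
    have hBA : B = A :=
      Set.eq_of_subset_of_ncard_le hsub (le_of_eq (hAcard.trans hBcard.symm)) A.toFinite
    have hzA : z ∈ A := ⟨hyz, SimpleGraph.dist_eq_one_iff_adj.mpr hxz⟩
    rw [← hBA] at hzA
    exact hzA.1
  -- Claim B
  have hB : ∀ x y : L, D.Adj x y → ¬ D.Adj y x → ∃ z, D.Adj y z ∧ D.Adj z x := by
    intro x y hxy hnyx
    by_contra hcon
    push_neg at hcon
    rcases hdeg x y with hout | hin
    · have hss : {z : L | D.Adj y z} ⊂ {z : L | D.Adj x z} := by
        rw [Set.ssubset_def]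
        constructor
        · intro z hz
          have hzx : z ≠ x := by rintro rfl; exact hnyx hz
          rcases hsemi x z hzx.symm with h | h
          · exact h
          · exact absurd h (hcon z hz)
        · intro hsup
          exact D.loopless y (hsup (show D.Adj x y from hxy))
      have hlt := Set.ncard_lt_ncard hss (Set.toFinite _)
      have hout' : {z : L | D.Adj x z}.ncard = {z : L | D.Adj y z}.ncard := by
        rw [← Nat.card_coe_set_eq, ← Nat.card_coe_set_eq]
        exact hout
      exact absurd hout' (ne_of_gt hlt)
    · have hss : {z : L | D.Adj z x} ⊂ {z : L | D.Adj z y} := by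
        rw [Set.ssubset_def]
        constructor
        · intro z hz
          have hzy : z ≠ y := by rintro rfl; exact hnyx hz
          rcases hsemi y z hzy.symm with h | h
          · exact absurd hz (hcon z h)
          · exact h
        · intro hsup
          exact D.loopless x (hsup (show D.Adj x y from hxy))
      have hlt := Set.ncard_lt_ncard hss (Set.toFinite _)
      have hin' : {z : L | D.Adj z x}.ncard = {z : L | D.Adj z y}.ncard := by
        rw [← Nat.card_coe_set_eq, ← Nat.card_coe_set_eq]
        exact hin
      exact absurd hin' (ne_of_lt hlt)
  -- tdist characterisations
  have htd0 : ∀ x : L, D.tdist x x = (0, 0) := by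
    intro x; simp [Digraph.tdist, Digraph.dist_self]
  have htd12 : ∀ x y : L, D.Adj x y → ¬ D.Adj y x → D.tdist x y = (1, 2) := by
    intro x y h hn
    have hne : x ≠ y := by rintro rfl; exact D.loopless _ h
    obtain ⟨z, hz1, hz2⟩ := hB x y h hn
    rw [Digraph.tdist, Digraph.dist_eq_one h,
      Digraph.dist_eq_two hne.symm hn ⟨z, hz1, hz2⟩]
  have htd11 : ∀ x y : L, D.Adj x y → D.Adj y x → D.tdist x y = (1, 1) := by
    intro x y h h'
    rw [Digraph.tdist, Digraph.dist_eq_one h, Digraph.dist_eq_one h']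
  have htdcases : ∀ x y : L, x ≠ y →
      D.tdist x y = (1, 1) ∨ D.tdist x y = (1, 2) ∨ D.tdist x y = (2, 1) := by
    intro x y hne
    rcases hsemi x y hne with h | h
    · by_cases h' : D.Adj y x
      · exact Or.inl (htd11 x y h h')
      · exact Or.inr (Or.inl (htd12 x y h h'))
    · by_cases h' : D.Adj x y
      · exact Or.inl (htd11 x y h' h)
      · right; right
        rw [Digraph.tdist_swap, htd12 y x h h']
        rfl
  have htdne : ∀ x y : L, x ≠ y → D.tdist x y ≠ (0, 0) := by
    intro x y hne h
    rcases htdcases x y hne with h' | h' | h' <;> rw [h'] at h <;> exact absurd h (by decide)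
  have hTall : ∀ w z : L, D.tdist w z = (0,0) ∨ D.tdist w z = (1,1) ∨
      D.tdist w z = (1,2) ∨ D.tdist w z = (2,1) := by
    intro w z
    by_cases hwz : w = z
    · subst hwz; exact Or.inl (htd0 w)
    · exact Or.inr (htdcases w z hwz)
  have hdzero : ∀ x y : L, D.tdist x y = (0, 0) → x = y := by
    intro x y h
    by_contra hne
    exact htdne x y hne h
  -- tdist in Γ agrees with tdist in D on line vertices
  have hagree : ∀ x y : L, Γ.tdist (x : Fin (n+1) → S) (y : Fin (n+1) → S) = D.tdist x y := by
    intro x y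
    by_cases hne : x = y
    · subst hne
      rw [htd0, Digraph.tdist, Digraph.dist_self]
    · have hvne : (x : Fin (n+1) → S) ≠ (y : Fin (n+1) → S) := fun h => hne (Subtype.ext h)
      by_cases hxy' : D.Adj x y
      · by_cases hyx' : D.Adj y x
        · rw [htd11 x y hxy' hyx', Digraph.tdist,
            Digraph.dist_eq_one (show Γ.Adj _ _ from hxy'),
            Digraph.dist_eq_one (show Γ.Adj _ _ from hyx')]
        · obtain ⟨z, hz1, hz2⟩ := hB x y hxy' hyx'
          rw [htd12 x y hxy' hyx', Digraph.tdist,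
            Digraph.dist_eq_one (show Γ.Adj _ _ from hxy'),
            Digraph.dist_eq_two hvne.symm (show ¬ Γ.Adj _ _ from hyx')
              ⟨(z : Fin (n+1) → S), hz1, hz2⟩]
      · have hyx' : D.Adj y x := (hsemi x y hne).resolve_left hxy'
        obtain ⟨z, hz1, hz2⟩ := hB y x hyx' hxy'
        have hDxy : D.tdist x y = (2, 1) := by
          rw [Digraph.tdist, Digraph.dist_eq_two hne hxy' ⟨z, hz1, hz2⟩,
            Digraph.dist_eq_one hyx']
        rw [hDxy, Digraph.tdist,
          Digraph.dist_eq_two hvne (show ¬ Γ.Adj _ _ from hxy')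
            ⟨(z : Fin (n+1) → S), hz1, hz2⟩,
          Digraph.dist_eq_one (show Γ.Adj _ _ from hyx')]
  -- P-sets agree with Γ for pairs of distinct vertices and types in T3
  have hT3 : ∀ p : ℕ × ℕ, p = (1,1) ∨ p = (1,2) ∨ p = (2,1) → (p.1 = 1 ∨ p.2 = 1) := by
    rintro p (rfl | rfl | rfl) <;> simp
  have hPeq : ∀ i' j' : ℕ × ℕ, (i' = (1,1) ∨ i' = (1,2) ∨ i' = (2,1)) →
      (j' = (1,1) ∨ j' = (1,2) ∨ j' = (2,1)) → ∀ x y : L, x ≠ y →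
      Nat.card (D.P i' j' x y) = Γ.p (D.tdist x y) i' j' := by
    intro i' j' hi' hj' x y hne
    have himg : Subtype.val '' (D.P i' j' x y) =
        Γ.P i' j' (x : Fin (n+1) → S) (y : Fin (n+1) → S) := by
      ext z
      constructor
      · rintro ⟨w, ⟨hw1, hw2⟩, rfl⟩
        exact ⟨by rw [hagree x w]; exact hw1, by rw [hagree w y]; exact hw2⟩
      · rintro ⟨hz1, hz2⟩
        have hadjx : Γ.underlying.Adj (x : Fin (n+1) → S) z := by
          rcases hT3 i' hi' with hc | hc
          · exact Or.inl (Digraph.adj_of_dist_eq_one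
              ((congrArg Prod.fst hz1).trans hc))
          · exact Or.inr (Digraph.adj_of_dist_eq_one
              ((congrArg Prod.snd hz1).trans hc))
        have hadjy : Γ.underlying.Adj (y : Fin (n+1) → S) z := by
          rcases hT3 j' hj' with hc | hc
          · exact Or.inr (Digraph.adj_of_dist_eq_one
              ((congrArg Prod.fst hz2).trans hc))
          · exact Or.inl (Digraph.adj_of_dist_eq_one
              ((congrArg Prod.snd hz2).trans hc))
        have hzL := hcommon x y hne z hadjx hadjy
        refine ⟨⟨z, hzL⟩, ⟨?_, ?_⟩, rfl⟩
        · rw [← hagree x ⟨z, hzL⟩]; exact hz1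
        · rw [← hagree ⟨z, hzL⟩ y]; exact hz2
    rw [Nat.card_coe_set_eq,
      ← Set.ncard_image_of_injective (D.P i' j' x y) Subtype.val_injective, himg,
      ← Nat.card_coe_set_eq, hwdr.2 i' j' _ _, hagree x y]
  -- degree dichotomy and partner existence
  have hpartner : ∃ h₀ : ℕ × ℕ, (h₀ = (1,2) ∨ h₀ = (2,1)) ∧
      ∀ x : L, ∃ y : L, x ≠ y ∧ D.tdist x y = h₀ := by
    have hdegncard : ∀ w : L, D.outDeg w = {z : L | D.Adj w z}.ncard :=
      fun w => Nat.card_coe_set_eq _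
    have hindegncard : ∀ w : L, D.inDeg w = {z : L | D.Adj z w}.ncard :=
      fun w => Nat.card_coe_set_eq _
    have huniv : ∀ w : L, ({z : L | z ≠ w}).ncard = q - 1 := by
      intro w
      have he : {z : L | z ≠ w} = Set.univ \ {w} := by
        ext z; simp [Set.mem_diff]
      rw [he, Set.ncard_diff (by simp), Set.ncard_univ, Set.ncard_singleton,
        Nat.card_coe_set_eq, hcardL]
    have hdich : (∀ u v : L, D.outDeg u = D.outDeg v) ∨
        (∀ u v : L, D.inDeg u = D.inDeg v) := by
      by_cases hout : ∀ u v : L, D.outDeg u = D.outDeg v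
      · exact Or.inl hout
      · push_neg at hout
        obtain ⟨u, v, huv⟩ := hout
        right
        have huvin : D.inDeg u = D.inDeg v := (hdeg u v).resolve_left huv
        have key : ∀ a : L, D.inDeg a = D.inDeg u := by
          intro a
          by_cases h1 : D.outDeg a = D.outDeg u
          · have h2 : D.outDeg a ≠ D.outDeg v := fun h => huv (h1.symm.trans h)
            exact ((hdeg a v).resolve_left h2).trans huvin.symm
          · exact (hdeg a u).resolve_left h1
        intro a b; rw [key a, key b]
    rcases hdich with hout | hin
    · refine ⟨(2, 1), Or.inr rfl, ?_⟩
      intro x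
      by_contra hcon
      push_neg at hcon
      have hall : ∀ z : L, z ≠ x → D.Adj x z := by
        intro z hz
        rcases hsemi x z hz.symm with h | h
        · exact h
        · by_cases h' : D.Adj x z
          · exact h'
          · exfalso
            refine hcon z (fun he => hz he.symm) ?_
            rw [Digraph.tdist_swap, htd12 z x h h']
            rfl
      have hxset : {z : L | D.Adj x z} = {z : L | z ≠ x} := by
        ext z
        constructor
        · intro h
          rintro rfl
          exact D.loopless _ h
        · intro h
          exact hall z h
      have houta : ∀ w : L, {z : L | D.Adj w z} = {z : L | z ≠ w} := by
        intro w
        refine Set.eq_of_subset_of_ncard_le ?_ ?_ (Set.toFinite _)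
        · intro z hz
          rintro rfl
          exact D.loopless _ hz
        · rw [huniv w, ← hdegncard w, hout w x, hdegncard x, hxset, huniv x]
      refine absurd ?_ hnc
      intro a b hab
      constructor
      · have : b ∈ {z : L | z ≠ a} := fun he => hab he.symm
        rw [← houta a] at this
        exact this
      · have : a ∈ {z : L | z ≠ b} := hab
        rw [← houta b] at this
        exact this
    · refine ⟨(1, 2), Or.inl rfl, ?_⟩
      intro x
      by_contra hcon
      push_neg at hcon
      have hall : ∀ z : L, z ≠ x → D.Adj z x := by
        intro z hz
        rcases hsemi x z hz.symm with h | h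
        · by_cases h' : D.Adj z x
          · exact h'
          · exfalso
            exact hcon z hz.symm (htd12 x z h h')
        · exact h
      have hxset : {z : L | D.Adj z x} = {z : L | z ≠ x} := by
        ext z
        constructor
        · intro h
          rintro rfl
          exact D.loopless _ h
        · intro h
          exact hall z h
      have hina : ∀ w : L, {z : L | D.Adj z w} = {z : L | z ≠ w} := by
        intro w
        refine Set.eq_of_subset_of_ncard_le ?_ ?_ (Set.toFinite _)
        · intro z hz
          rintro rfl
          exact D.loopless _ hz
        · rw [huniv w, ← hindegncard w, hin w x, hindegncard x, hxset, huniv x]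
      refine absurd ?_ hnc
      intro a b hab
      constructor
      · have : a ∈ {z : L | z ≠ b} := hab
        rw [← hina b] at this
        exact this
      · have : b ∈ {z : L | z ≠ a} := fun he => hab he.symm
        rw [← hina a] at this
        exact this
  obtain ⟨h₀, hh₀, hpart⟩ := hpartner
  have hh₀T3 : h₀ = (1,1) ∨ h₀ = (1,2) ∨ h₀ = (2,1) := Or.inr hh₀
  -- constancy of the one-point counts
  have hK : ∀ i' : ℕ × ℕ, (i' = (1,1) ∨ i' = (1,2) ∨ i' = (2,1)) → ∀ x : L,
      Nat.card {z : L | D.tdist x z = i'} =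
        (if i' = h₀ then 1 else 0) +
          (Γ.p h₀ i' (1,1) + Γ.p h₀ i' (1,2) + Γ.p h₀ i' (2,1)) := by
    intro i' hi' x
    obtain ⟨y, hxy, hty⟩ := hpart x
    set A := {z : L | D.tdist x z = i'} with hA
    have hsplit : (A ∩ {y}).ncard + (A \ {y}).ncard = A.ncard :=
      Set.ncard_inter_add_ncard_diff_eq_ncard A {y} (Set.toFinite _)
    have h1 : (A ∩ {y}).ncard = if i' = h₀ then 1 else 0 := by
      by_cases hc : i' = h₀
      · have hyA : y ∈ A := by rw [hA]; simp only [Set.mem_setOf_eq]; rw [hty, hc]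
        have he : A ∩ {y} = {y} := Set.inter_eq_self_of_subset_right (by
          rintro z rfl; exact hyA)
        rw [he, Set.ncard_singleton, if_pos hc]
      · have he : A ∩ {y} = ∅ := by
          ext z
          simp only [Set.mem_inter_iff, Set.mem_singleton_iff, Set.mem_empty_iff_false,
            iff_false, not_and]
          rintro hz rfl
          rw [hA] at hz
          simp only [Set.mem_setOf_eq] at hz
          exact hc (hz.symm.trans hty)
        rw [he, Set.ncard_empty, if_neg hc]
    have hi'ne : i' ≠ (0, 0) := by
      rcases hi' with rfl | rfl | rfl <;> decide
    have hdiff : A \ {y} = D.P i' (1,1) x y ∪ D.P i' (1,2) x y ∪ D.P i' (2,1) x y := by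
      ext z
      constructor
      · rintro ⟨hzA, hzy⟩
        have hzy' : z ≠ y := hzy
        rw [hA] at hzA
        simp only [Set.mem_setOf_eq] at hzA
        rcases htdcases z y hzy' with h | h | h
        · exact Or.inl (Or.inl ⟨hzA, h⟩)
        · exact Or.inl (Or.inr ⟨hzA, h⟩)
        · exact Or.inr ⟨hzA, h⟩
      · have hney : ∀ w : L, w = y → ∀ jj : ℕ × ℕ, D.tdist w y = jj → jj = (0, 0) := by
          intro w hw jj h
          subst hw
          exact h.symm.trans (htd0 w)
        rintro ((⟨h1', h2'⟩ | ⟨h1', h2'⟩) | ⟨h1', h2'⟩) <;>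
          exact ⟨by rw [hA]; simp only [Set.mem_setOf_eq]; exact h1',
            fun he => absurd (hney z he _ h2') (by decide)⟩
    have hd12 : Disjoint (D.P i' (1,1) x y) (D.P i' (1,2) x y) := by
      rw [Set.disjoint_left]
      rintro z ⟨-, h1'⟩ ⟨-, h2'⟩
      rw [h1'] at h2'
      exact absurd h2' (by decide)
    have hd3 : Disjoint (D.P i' (1,1) x y ∪ D.P i' (1,2) x y) (D.P i' (2,1) x y) := by
      rw [Set.disjoint_left]
      rintro z (⟨-, h1'⟩ | ⟨-, h1'⟩) ⟨-, h2'⟩ <;>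
        (rw [h1'] at h2'; exact absurd h2' (by decide))
    have e1 : (D.P i' (1,1) x y).ncard = Γ.p h₀ i' (1,1) := by
      rw [← Nat.card_coe_set_eq, hPeq i' (1,1) hi' (Or.inl rfl) x y hxy, hty]
    have e2 : (D.P i' (1,2) x y).ncard = Γ.p h₀ i' (1,2) := by
      rw [← Nat.card_coe_set_eq, hPeq i' (1,2) hi' (Or.inr (Or.inl rfl)) x y hxy, hty]
    have e3 : (D.P i' (2,1) x y).ncard = Γ.p h₀ i' (2,1) := by
      rw [← Nat.card_coe_set_eq, hPeq i' (2,1) hi' (Or.inr (Or.inr rfl)) x y hxy, hty]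
    have hcards : (A \ {y}).ncard =
        Γ.p h₀ i' (1,1) + Γ.p h₀ i' (1,2) + Γ.p h₀ i' (2,1) := by
      rw [hdiff, Set.ncard_union_eq hd3 (Set.toFinite _) (Set.toFinite _),
        Set.ncard_union_eq hd12 (Set.toFinite _) (Set.toFinite _), e1, e2, e3]
    rw [Nat.card_coe_set_eq, ← hsplit, h1, hcards]
  -- master lemma
  have hmaster : ∀ i' j' : ℕ × ℕ, ∀ x y x' y' : L, D.tdist x y = D.tdist x' y' →
      Nat.card (D.P i' j' x y) = Nat.card (D.P i' j' x' y') := by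
    intro i' j' x y x' y' hh
    by_cases hxy : x = y
    · subst hxy
      have hx'y' : x' = y' := hdzero x' y' (by rw [← hh, htd0])
      subst hx'y'
      by_cases hj : j' = i'.swap
      · subst hj
        have hset : ∀ w : L, D.P i' i'.swap w w = {z : L | D.tdist w z = i'} := by
          intro w
          ext z
          simp only [Digraph.P, Set.mem_setOf_eq]
          constructor
          · rintro ⟨h1, -⟩; exact h1
          · intro h1
            exact ⟨h1, by rw [Digraph.tdist_swap, h1]⟩
        rw [hset x, hset x']
        by_cases hiT3 : i' = (1,1) ∨ i' = (1,2) ∨ i' = (2,1)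
        · rw [hK i' hiT3 x, hK i' hiT3 x']
        · by_cases hi0 : i' = (0, 0)
          · subst hi0
            have hsing : ∀ w : L, {z : L | D.tdist w z = (0,0)} = {w} := by
              intro w
              ext z
              simp only [Set.mem_setOf_eq, Set.mem_singleton_iff]
              constructor
              · intro h; exact (hdzero w z h).symm
              · rintro rfl; exact htd0 _
            rw [hsing x, hsing x']
            rw [Nat.card_coe_set_eq, Nat.card_coe_set_eq, Set.ncard_singleton,
              Set.ncard_singleton]
          · have hempty : ∀ w : L, {z : L | D.tdist w z = i'} = ∅ := by
              intro w
              ext z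
              simp only [Set.mem_setOf_eq, Set.mem_empty_iff_false, iff_false]
              intro h
              rcases hTall w z with h' | h' | h' | h' <;> rw [h'] at h
              · exact hi0 h.symm
              · exact hiT3 (Or.inl h.symm)
              · exact hiT3 (Or.inr (Or.inl h.symm))
              · exact hiT3 (Or.inr (Or.inr h.symm))
            rw [hempty x, hempty x']
      · have hempty : ∀ w : L, D.P i' j' w w = ∅ := by
          intro w
          ext z
          simp only [Digraph.P, Set.mem_setOf_eq, Set.mem_empty_iff_false, iff_false,
            not_and]
          intro h1 h2
          exact hj (by rw [← h2, Digraph.tdist_swap, h1])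
        rw [hempty x, hempty x']
    · have hxy' : x' ≠ y' := by
        intro he
        subst he
        exact hxy (hdzero x y (hh.trans (htd0 x')))
      by_cases hi0 : i' = (0, 0)
      · subst hi0
        have hset : ∀ u v : L, D.P (0,0) j' u v =
            if D.tdist u v = j' then {u} else (∅ : Set L) := by
          intro u v
          split
          · next hc =>
            ext z
            simp only [Digraph.P, Set.mem_setOf_eq, Set.mem_singleton_iff]
            constructor
            · rintro ⟨h1, -⟩; exact (hdzero u z h1).symm
            · rintro rfl; exact ⟨htd0 _, hc⟩
          · next hc =>
            ext z
            simp only [Digraph.P, Set.mem_setOf_eq, Set.mem_empty_iff_false, iff_false,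
              not_and]
            intro h1 h2
            have hzu : z = u := (hdzero u z h1).symm
            subst hzu
            exact hc h2
        rw [hset x y, hset x' y', hh]
        split
        · rw [Nat.card_coe_set_eq, Nat.card_coe_set_eq, Set.ncard_singleton,
            Set.ncard_singleton]
        · rfl
      · by_cases hj0 : j' = (0, 0)
        · subst hj0
          have hset : ∀ u v : L, D.P i' (0,0) u v =
              if D.tdist u v = i' then {v} else (∅ : Set L) := by
            intro u v
            split
            · next hc =>
              ext z
              simp only [Digraph.P, Set.mem_setOf_eq, Set.mem_singleton_iff]
              constructor
              · rintro ⟨-, h2⟩; exact hdzero z v h2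
              · rintro rfl; exact ⟨hc, htd0 _⟩
            · next hc =>
              ext z
              simp only [Digraph.P, Set.mem_setOf_eq, Set.mem_empty_iff_false, iff_false,
                not_and]
              intro h1 h2
              have hzv : z = v := hdzero z v h2
              subst hzv
              exact hc h1
          rw [hset x y, hset x' y', hh]
          split
          · rw [Nat.card_coe_set_eq, Nat.card_coe_set_eq, Set.ncard_singleton,
              Set.ncard_singleton]
          · rfl
        · by_cases hiT3 : i' = (1,1) ∨ i' = (1,2) ∨ i' = (2,1)
          · by_cases hjT3 : j' = (1,1) ∨ j' = (1,2) ∨ j' = (2,1)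
            · rw [hPeq i' j' hiT3 hjT3 x y hxy, hPeq i' j' hiT3 hjT3 x' y' hxy', hh]
            · have hempty : ∀ u v : L, D.P i' j' u v = ∅ := by
                intro u v
                ext z
                simp only [Digraph.P, Set.mem_setOf_eq, Set.mem_empty_iff_false,
                  iff_false, not_and]
                intro h1 h2
                rcases hTall z v with h' | h' | h' | h' <;> rw [h'] at h2
                · exact hj0 h2.symm
                · exact hjT3 (Or.inl h2.symm)
                · exact hjT3 (Or.inr (Or.inl h2.symm))
                · exact hjT3 (Or.inr (Or.inr h2.symm))
              rw [hempty x y, hempty x' y']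
          · have hempty : ∀ u v : L, D.P i' j' u v = ∅ := by
              intro u v
              ext z
              simp only [Digraph.P, Set.mem_setOf_eq, Set.mem_empty_iff_false,
                iff_false, not_and]
              intro h1 h2
              rcases hTall u z with h' | h' | h' | h' <;> rw [h'] at h1
              · exact hi0 h1.symm
              · exact hiT3 (Or.inl h1.symm)
              · exact hiT3 (Or.inr (Or.inl h1.symm))
              · exact hiT3 (Or.inr (Or.inr h1.symm))
            rw [hempty x y, hempty x' y']
  -- strong connectivity
  have hsc : D.StronglyConnected := by
    intro x y
    by_cases hne : x = y
    · exact ⟨0, Digraph.hasPath_zero.mpr hne⟩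
    · rcases hsemi x y hne with h | h
      · exact ⟨1, Digraph.hasPath_one.mpr h⟩
      · by_cases h' : D.Adj x y
        · exact ⟨1, Digraph.hasPath_one.mpr h'⟩
        · obtain ⟨z, hz1, hz2⟩ := hB y x h h'
          exact ⟨2, Digraph.hasPath_two.mpr ⟨z, hz1, hz2⟩⟩
  have hwdrD : D.IsWDR := by
    refine ⟨hsc, ?_⟩
    intro i' j' x y
    have hex : ∃ xy : L × L, D.tdist xy.1 xy.2 = D.tdist x y := ⟨(x, y), rfl⟩
    rw [Digraph.p, dif_pos hex]
    exact hmaster i' j' x y _ _ hex.choose_spec.symm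
  have hdiam : D.diameter = 2 := by
    have hd2 : D.dist y₀ x₀ = 2 := congrArg Prod.snd (htd12 x₀ y₀ hxy₀ hnyx₀)
    have hub : ∀ u v : L, D.dist u v ≤ 2 := by
      intro u v
      have h1 : D.dist u v = (D.tdist u v).1 := rfl
      rcases hTall u v with h | h | h | h <;> rw [h1, h] <;> decide
    rw [Digraph.diameter]
    apply le_antisymm
    · refine csSup_le ⟨2, y₀, x₀, hd2⟩ ?_
      rintro b ⟨u, v, rfl⟩
      exact hub u v
    · refine le_csSup ⟨2, ?_⟩ ⟨y₀, x₀, hd2⟩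
      rintro b ⟨u, v, rfl⟩
      exact hub u v
  have hg3mem : (3 : ℕ) ∈ {n | 0 < n ∧ ∃ x : L, D.HasPath x x n} := by
    obtain ⟨z, hz1, hz2⟩ := hB x₀ y₀ hxy₀ hnyx₀
    refine ⟨by omega, x₀, fun k => if k = 0 then x₀ else if k = 1 then y₀ else
      if k = 2 then z else x₀, by simp, by simp, ?_⟩
    intro k hk
    interval_cases k <;> simpa
  have hgirth : D.girth ≤ 3 := Nat.sInf_le hg3mem
  have hgirthlb : ∀ b ∈ {n | 0 < n ∧ ∃ x : L, D.HasPath x x n}, 2 ≤ b := by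
    rintro b ⟨hb, x, hp⟩
    rcases Nat.lt_or_ge b 2 with hlt | hge
    · interval_cases b
      exact absurd (Digraph.hasPath_one.mp hp) (D.loopless x)
    · exact hge
  have htd21 : D.tdist y₀ x₀ = (2, 1) := by
    rw [Digraph.tdist_swap, htd12 x₀ y₀ hxy₀ hnyx₀]
    rfl
  have htdset : D.tdSet = {((0:ℕ), (0:ℕ)), (1, 2), (2, 1), (1, D.girth - 1)} := by
    by_cases hdig : ∃ u v : L, D.Adj u v ∧ D.Adj v u
    · obtain ⟨u, v, huv, hvu⟩ := hdig
      have hg2 : D.girth = 2 := by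
        apply le_antisymm
        · exact Nat.sInf_le ⟨by omega, u, Digraph.hasPath_two.mpr ⟨v, huv, hvu⟩⟩
        · exact le_csInf ⟨2, by omega, u, Digraph.hasPath_two.mpr ⟨v, huv, hvu⟩⟩ hgirthlb
      rw [hg2]
      ext p
      constructor
      · rintro ⟨a, b, rfl⟩
        rcases hTall a b with h | h | h | h <;> rw [h] <;> simp
      · intro hp
        simp only [Set.mem_insert_iff, Set.mem_singleton_iff] at hp
        rcases hp with rfl | rfl | rfl | rfl
        · exact ⟨x₀, x₀, htd0 x₀⟩
        · exact ⟨x₀, y₀, htd12 x₀ y₀ hxy₀ hnyx₀⟩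
        · exact ⟨y₀, x₀, htd21⟩
        · exact ⟨u, v, htd11 u v huv hvu⟩
    · push_neg at hdig
      have hg3 : D.girth = 3 := by
        apply le_antisymm hgirth
        refine le_csInf ⟨3, hg3mem⟩ ?_
        rintro b ⟨hb, x, hp⟩
        by_contra hlt
        push_neg at hlt
        interval_cases b
        · exact absurd (Digraph.hasPath_one.mp hp) (D.loopless x)
        · obtain ⟨z, h1, h2⟩ := Digraph.hasPath_two.mp hp
          exact hdig x z h1 h2
      rw [hg3]
      ext p
      constructor
      · rintro ⟨a, b, rfl⟩
        rcases hTall a b with h | h | h | h <;> rw [h]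
        · simp
        · exfalso
          have hab : D.Adj a b := Digraph.adj_of_dist_eq_one (congrArg Prod.fst h)
          have hba : D.Adj b a := Digraph.adj_of_dist_eq_one (congrArg Prod.snd h)
          exact hdig a b hab hba
        · simp
        · simp
      · intro hp
        simp only [Set.mem_insert_iff, Set.mem_singleton_iff] at hp
        rcases hp with rfl | rfl | rfl | rfl
        · exact ⟨x₀, x₀, htd0 x₀⟩
        · exact ⟨x₀, y₀, htd12 x₀ y₀ hxy₀ hnyx₀⟩
        · exact ⟨y₀, x₀, htd21⟩
        · exact ⟨x₀, y₀, htd12 x₀ y₀ hxy₀ hnyx₀⟩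
  exact ⟨hwdrD, hdiam, hgirth, htdset⟩
end

section
/- Suppose q>2. Then for every 1≤i≤d, every α∈S^{d−1}, and all x,y∈V(Γᵢ(α)), one has d⁺_{Γᵢ(α)}(x)=d⁺_{Γᵢ(α)}(y) and d⁻_{Γᵢ(α)}(x)=d⁻_{Γᵢ(α)}(y). -/
section DegreeAux
open Paper Paper.Digraph

variable {V : Type*}

private lemma aux_hasPath_zero (G : Paper.Digraph V) {x y : V} : G.HasPath x y 0 ↔ x = y := by
  constructor
  · rintro ⟨f, h0, hn, -⟩
    rw [← h0, hn]
  · rintro rfl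
    exact ⟨fun _ => x, rfl, rfl, fun k hk => absurd hk (Nat.not_lt_zero k)⟩

private lemma aux_dist_zero (G : Paper.Digraph V) (hsc : G.StronglyConnected) {x y : V} :
    G.dist x y = 0 ↔ x = y := by
  constructor
  · intro h
    have hne : {m | G.HasPath x y m}.Nonempty := hsc x y
    have hm := Nat.sInf_mem hne
    rw [show sInf {m | G.HasPath x y m} = G.dist x y from rfl, h] at hm
    exact (aux_hasPath_zero G).mp hm
  · rintro rfl
    exact Nat.sInf_eq_zero.mpr (Or.inl ((aux_hasPath_zero G).mpr rfl))

private lemma aux_dist_one (G : Paper.Digraph V) (hsc : G.StronglyConnected) {x y : V} :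
    G.dist x y = 1 ↔ G.Adj x y := by
  constructor
  · intro h
    have hne : {m | G.HasPath x y m}.Nonempty := hsc x y
    have hm := Nat.sInf_mem hne
    rw [show sInf {m | G.HasPath x y m} = G.dist x y from rfl, h] at hm
    obtain ⟨f, h0, h1, hadj⟩ := hm
    have := hadj 0 Nat.one_pos
    rwa [h0, h1] at this
  · intro h
    have h1 : G.HasPath x y 1 := by
      refine ⟨fun k => if k = 0 then x else y, by simp, by simp, ?_⟩
      intro k hk
      have hk0 : k = 0 := Nat.lt_one_iff.mp hk
      subst hk0
      simpa using h
    have hle : G.dist x y ≤ 1 := Nat.sInf_le h1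
    have hne : G.dist x y ≠ 0 := by
      intro h0
      have := (aux_dist_zero G hsc).mp h0
      subst this
      exact G.loopless _ h
    omega

private lemma aux_count_sym [Finite V] (G : Paper.Digraph V) (hwdr : G.IsWDR)
    (hcomm : G.IsCommutative) (cnd : ℕ × ℕ → ℕ × ℕ → Prop) (x y : V) :
    Nat.card {z | cnd (G.tdist x z) (G.tdist z y)} =
      Nat.card {z | cnd (G.tdist z y) (G.tdist x z)} := by
  classical
  haveI : Fintype V := Fintype.ofFinite V
  have hcard : ∀ p : V → Prop, Nat.card {z | p z} = (Finset.univ.filter p).card := by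
    intro p
    rw [Nat.card_eq_fintype_card]
    exact Fintype.card_subtype p
  set D : Finset (ℕ × ℕ) := Finset.univ.image (fun p : V × V => G.tdist p.1 p.2) with hD
  have hmemD : ∀ u v : V, G.tdist u v ∈ D := fun u v =>
    Finset.mem_image.mpr ⟨(u, v), Finset.mem_univ _, rfl⟩
  have hDtd : ∀ a, a ∈ D → a ∈ G.tdSet := by
    intro a ha
    obtain ⟨p, -, hp⟩ := Finset.mem_image.mp ha
    exact ⟨p.1, p.2, hp⟩
  have hP : ∀ a b : ℕ × ℕ, a ∈ D → b ∈ D →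
      Nat.card (G.P a b x y) = Nat.card (G.P b a x y) := by
    intro a b ha hb
    rw [hwdr.2 a b x y, hwdr.2 b a x y,
      hcomm (G.tdist x y) a b ⟨x, y, rfl⟩ (hDtd a ha) (hDtd b hb)]
  set f : V → (ℕ × ℕ) × (ℕ × ℕ) := fun z => (G.tdist x z, G.tdist z y) with hf
  have hg : ∀ k : (ℕ × ℕ) × (ℕ × ℕ),
      (Finset.univ.filter fun z => f z = k).card = Nat.card (G.P k.1 k.2 x y) := by
    intro k
    rw [show (G.P k.1 k.2 x y) = {z | G.tdist x z = k.1 ∧ G.tdist z y = k.2} from rfl, hcard]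
    congr 1
    ext z
    simp only [Finset.mem_filter, Finset.mem_univ, true_and, hf, Prod.ext_iff]
  have hfib : ∀ (c : ℕ × ℕ → ℕ × ℕ → Prop),
      (Finset.univ.filter fun z => c (G.tdist x z) (G.tdist z y)).card =
        ∑ k ∈ (D ×ˢ D).filter (fun k => c k.1 k.2),
          (Finset.univ.filter fun z => f z = k).card := by
    intro c
    rw [Finset.card_eq_sum_card_fiberwise
      (f := f) (t := (D ×ˢ D).filter (fun k => c k.1 k.2)) ?_]
    · refine Finset.sum_congr rfl fun k hk => ?_
      have hc : c k.1 k.2 := (Finset.mem_filter.mp hk).2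
      congr 1
      ext z
      simp only [Finset.mem_filter, Finset.mem_univ, true_and]
      constructor
      · rintro ⟨-, h⟩
        exact h
      · intro h
        refine ⟨?_, h⟩
        have h1 : G.tdist x z = k.1 := congrArg Prod.fst h
        have h2 : G.tdist z y = k.2 := congrArg Prod.snd h
        rw [h1, h2]
        exact hc
    · intro z hz
      simp only [Finset.mem_coe, Finset.mem_filter, Finset.mem_univ, true_and] at hz ⊢
      exact ⟨Finset.mem_product.mpr ⟨hmemD x z, hmemD z y⟩, hz⟩
  have himg : ((D ×ˢ D).filter fun k => cnd k.1 k.2).image Prod.swap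
      = (D ×ˢ D).filter fun k => cnd k.2 k.1 := by
    ext k
    simp only [Finset.mem_image, Finset.mem_filter, Finset.mem_product]
    constructor
    · rintro ⟨a, ⟨⟨h1, h2⟩, hc⟩, rfl⟩
      exact ⟨⟨h2, h1⟩, hc⟩
    · rintro ⟨⟨h1, h2⟩, hc⟩
      exact ⟨k.swap, ⟨⟨h2, h1⟩, hc⟩, Prod.swap_swap k⟩
  rw [hcard, hcard, hfib cnd, hfib (fun a b => cnd b a)]
  have hsum : ∑ k ∈ (D ×ˢ D).filter (fun k => cnd k.1 k.2),
      (Finset.univ.filter fun z => f z = k).card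
      = ∑ k ∈ (D ×ˢ D).filter (fun k => cnd k.1 k.2),
        (Finset.univ.filter fun z => f z = k.swap).card := by
    refine Finset.sum_congr rfl fun k hk => ?_
    have hk' := Finset.mem_filter.mp hk
    have h1 := (Finset.mem_product.mp hk'.1).1
    have h2 := (Finset.mem_product.mp hk'.1).2
    rw [hg k, hg k.swap]
    exact hP k.1 k.2 h1 h2
  rw [hsum, ← himg]
  rw [Finset.sum_image ?_]
  · intro a _ b _ hab
    exact Prod.swap_injective hab

variable {S : Type*} {n : ℕ}

private lemma aux_mem_lineSet {i : Fin (n + 1)} {α : Fin n → S} {x : Fin (n + 1) → S} :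
    x ∈ lineSet i α ↔ ∀ k : Fin n, x (i.succAbove k) = α k := by
  constructor
  · rintro ⟨b, rfl⟩ k
    simp
  · intro h
    refine ⟨x i, ?_⟩
    funext j
    rcases eq_or_ne j i with rfl | hj
    · simp
    · obtain ⟨k, rfl⟩ := Fin.exists_succAbove_eq hj
      simpa using (h k).symm

private lemma aux_line_offdiag {i : Fin (n + 1)} {α : Fin n → S} {x y : Fin (n + 1) → S}
    (hx : x ∈ lineSet i α) (hy : y ∈ lineSet i α) {j : Fin (n + 1)} (hj : j ≠ i) :
    x j = y j := by
  obtain ⟨k, rfl⟩ := Fin.exists_succAbove_eq hj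
  rw [aux_mem_lineSet.mp hx k, aux_mem_lineSet.mp hy k]

private lemma aux_line_diag {i : Fin (n + 1)} {α : Fin n → S} {x y : Fin (n + 1) → S}
    (hx : x ∈ lineSet i α) (hy : y ∈ lineSet i α) (hxy : x ≠ y) : x i ≠ y i := by
  intro h
  apply hxy
  funext j
  rcases eq_or_ne j i with rfl | hj
  · exact h
  · exact aux_line_offdiag hx hy hj

private lemma aux_line_hamming_adj {i : Fin (n + 1)} {α : Fin n → S} {x y : Fin (n + 1) → S}
    (hx : x ∈ lineSet i α) (hy : y ∈ lineSet i α) (hxy : x ≠ y) :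
    (hammingGraph (Fin (n + 1)) S).Adj x y :=
  ⟨i, aux_line_diag hx hy hxy, fun j hj => aux_line_offdiag hx hy hj⟩

private lemma aux_clique {i : Fin (n + 1)} {α : Fin n → S} {x y z : Fin (n + 1) → S}
    (hx : x ∈ lineSet i α) (hy : y ∈ lineSet i α) (hxy : x ≠ y)
    (hzx : (hammingGraph (Fin (n + 1)) S).Adj z x)
    (hzy : (hammingGraph (Fin (n + 1)) S).Adj z y) : z ∈ lineSet i α := by
  obtain ⟨j, hzj, hoff⟩ := hzx
  rcases eq_or_ne j i with rfl | hji
  · rw [aux_mem_lineSet]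
    intro k
    rw [hoff _ (Fin.succAbove_ne j k), aux_mem_lineSet.mp hx k]
  · exfalso
    obtain ⟨j2, hzj2, hoff2⟩ := hzy
    have hzi : z i = x i := hoff i (Ne.symm hji)
    have hzyi : z i ≠ y i := by
      rw [hzi]
      exact aux_line_diag hx hy hxy
    have hj2 : j2 = i := by
      by_contra hne
      exact hzyi (hoff2 i fun h => hne h.symm)
    subst hj2
    have h1 : z j = y j := hoff2 j hji
    have h2 : x j = y j := aux_line_offdiag hx hy hji
    exact hzj (by rw [h1, ← h2])

private lemma aux_pair [Finite S] (Γ : Paper.Digraph (Fin (n + 1) → S))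
    (hwdr : Γ.IsWDR) (hcomm : Γ.IsCommutative)
    (hund : Γ.underlying = hammingGraph (Fin (n + 1)) S)
    {i : Fin (n + 1)} {α : Fin n → S} {x y : Fin (n + 1) → S}
    (hx : x ∈ lineSet i α) (hy : y ∈ lineSet i α) (hxy : x ≠ y) :
    Nat.card {z | z ∈ lineSet i α ∧ Γ.Adj x z} =
      Nat.card {z | z ∈ lineSet i α ∧ Γ.Adj z y} := by
  have hsc := hwdr.1
  have hadj1 : ∀ u v, Γ.Adj u v ↔ (Γ.tdist u v).1 = 1 := fun u v =>
    (aux_dist_one Γ hsc).symm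
  have hham : ∀ u v, (hammingGraph (Fin (n + 1)) S).Adj u v ↔ (Γ.Adj u v ∨ Γ.Adj v u) := by
    intro u v
    rw [← hund]
    exact Iff.rfl
  have heq0 : ∀ u v, Γ.tdist u v = (0, 0) ↔ u = v := by
    intro u v
    rw [Prod.ext_iff]
    constructor
    · rintro ⟨h1, -⟩
      exact (aux_dist_zero Γ hsc).mp h1
    · rintro rfl
      exact ⟨(aux_dist_zero Γ hsc).mpr rfl, (aux_dist_zero Γ hsc).mpr rfl⟩
  set cnd : ℕ × ℕ → ℕ × ℕ → Prop :=
    fun a b => a.1 = 1 ∧ (b.1 = 1 ∨ b.2 = 1 ∨ b = (0, 0)) with hcnd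
  have hset1 : {z | z ∈ lineSet i α ∧ Γ.Adj x z}
      = {z | cnd (Γ.tdist x z) (Γ.tdist z y)} := by
    ext z
    simp only [Set.mem_setOf_eq, hcnd]
    constructor
    · rintro ⟨hz, ha⟩
      refine ⟨(hadj1 x z).mp ha, ?_⟩
      rcases eq_or_ne z y with rfl | hzy
      · exact Or.inr (Or.inr ((heq0 _ _).mpr rfl))
      · rcases (hham z y).mp (aux_line_hamming_adj hz hy hzy) with h | h
        · exact Or.inl ((hadj1 z y).mp h)
        · exact Or.inr (Or.inl ((hadj1 y z).mp h))
    · rintro ⟨h1, h2⟩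
      have ha : Γ.Adj x z := (hadj1 x z).mpr h1
      refine ⟨?_, ha⟩
      rcases h2 with h | h | h
      · exact aux_clique hx hy hxy ((hham z x).mpr (Or.inr ha))
          ((hham z y).mpr (Or.inl ((hadj1 z y).mpr h)))
      · exact aux_clique hx hy hxy ((hham z x).mpr (Or.inr ha))
          ((hham z y).mpr (Or.inr ((hadj1 y z).mpr h)))
      · rw [(heq0 z y).mp h]
        exact hy
  have hset2 : {z | z ∈ lineSet i α ∧ Γ.Adj z y}
      = {z | cnd (Γ.tdist z y) (Γ.tdist x z)} := by
    ext z
    simp only [Set.mem_setOf_eq, hcnd]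
    constructor
    · rintro ⟨hz, ha⟩
      refine ⟨(hadj1 z y).mp ha, ?_⟩
      rcases eq_or_ne x z with heq | hzx
      · exact Or.inr (Or.inr ((heq0 _ _).mpr heq))
      · rcases (hham z x).mp (aux_line_hamming_adj hz hx fun h => hzx h.symm) with h | h
        · exact Or.inr (Or.inl ((hadj1 z x).mp h))
        · exact Or.inl ((hadj1 x z).mp h)
    · rintro ⟨h1, h2⟩
      have ha : Γ.Adj z y := (hadj1 z y).mpr h1
      refine ⟨?_, ha⟩
      rcases h2 with h | h | h
      · exact aux_clique hx hy hxy ((hham z x).mpr (Or.inr ((hadj1 x z).mpr h)))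
          ((hham z y).mpr (Or.inl ha))
      · exact aux_clique hx hy hxy ((hham z x).mpr (Or.inl ((hadj1 z x).mpr h)))
          ((hham z y).mpr (Or.inl ha))
      · rw [← (heq0 x z).mp h]
        exact hx
  rw [hset1, hset2]
  exact aux_count_sym Γ hwdr hcomm cnd x y

private lemma aux_outDeg (Γ : Paper.Digraph (Fin (n + 1) → S)) (i : Fin (n + 1))
    (α : Fin n → S) (x : lineSet i α) :
    (Γ.line i α).outDeg x = Nat.card {z | z ∈ lineSet i α ∧ Γ.Adj x.1 z} :=
  Nat.card_congr (Equiv.subtypeSubtypeEquivSubtypeInter (· ∈ lineSet i α) (Γ.Adj x.1 ·))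

private lemma aux_inDeg (Γ : Paper.Digraph (Fin (n + 1) → S)) (i : Fin (n + 1))
    (α : Fin n → S) (x : lineSet i α) :
    (Γ.line i α).inDeg x = Nat.card {z | z ∈ lineSet i α ∧ Γ.Adj z x.1} :=
  Nat.card_congr (Equiv.subtypeSubtypeEquivSubtypeInter (· ∈ lineSet i α) (Γ.Adj · x.1))

end DegreeAux

open Paper in
/-- **Lemma 4.4.** If `q > 2`, then all vertices of `Γᵢ(α)` have the same
out-degree and the same in-degree in `Γᵢ(α)`. -/
theorem lemma_degree {S : Type*} [Finite S] {n : ℕ}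
    (Γ : Paper.Digraph (Fin (n + 1) → S)) (hq : 2 < Nat.card S)
    (hwdr : Γ.IsWDR) (hcomm : Γ.IsCommutative)
    (hund : Γ.underlying = hammingGraph (Fin (n + 1)) S) :
    ∀ (i : Fin (n + 1)) (α : Fin n → S) (x y : lineSet i α),
      (Γ.line i α).outDeg x = (Γ.line i α).outDeg y ∧
      (Γ.line i α).inDeg x = (Γ.line i α).inDeg y := by
  intro i α x y
  have hS : ∃ b : S, b ≠ x.1 i ∧ b ≠ y.1 i := by
    by_contra h
    push_neg at h
    have hsub : (Set.univ : Set S) ⊆ {x.1 i, y.1 i} := by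
      intro b _
      rcases eq_or_ne b (x.1 i) with hb | hb
      · exact Or.inl hb
      · exact Or.inr (h b hb)
    have h2 : (Set.univ : Set S).ncard ≤ ({x.1 i, y.1 i} : Set S).ncard :=
      Set.ncard_le_ncard hsub (Set.toFinite _)
    rw [Set.ncard_univ] at h2
    have h3 : ({x.1 i, y.1 i} : Set S).ncard ≤ 2 := by
      apply le_trans (Set.ncard_insert_le _ _)
      simp [Set.ncard_singleton]
    omega
  obtain ⟨b, hbx, hby⟩ := hS
  have hwC : i.insertNth b α ∈ lineSet i α := ⟨b, rfl⟩
  have hwx : i.insertNth b α ≠ x.1 := by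
    intro h
    apply hbx
    rw [← congrFun h i, Fin.insertNth_apply_same]
  have hwy : i.insertNth b α ≠ y.1 := by
    intro h
    apply hby
    rw [← congrFun h i, Fin.insertNth_apply_same]
  constructor
  · rw [aux_outDeg Γ i α x, aux_outDeg Γ i α y,
      aux_pair Γ hwdr hcomm hund x.2 hwC (fun h => hwx h.symm),
      aux_pair Γ hwdr hcomm hund y.2 hwC (fun h => hwy h.symm)]
  · rw [aux_inDeg Γ i α x, aux_inDeg Γ i α y,
      ← aux_pair Γ hwdr hcomm hund hwC x.2 hwx,
      ← aux_pair Γ hwdr hcomm hund hwC y.2 hwy]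
end
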